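/- The stability–fit tradeoff of the stable assignment problem is not monotone. Precisely, there exist n, edge weights x on the complete bipartite graph K_{n,n}, a perfect matching S₀, an edge e ∈ S₀, and parameters 0 ≤ a₁ < a₂ < a₃ such that, defining modified weights y_a(e') = x(e') + a for e' ∈ S₀ and y_a(e') = x(e') for e' ∉ S₀, the edge e belongs to every maximum-y_{a₂}-weight perfect matching, but e belongs to no maximum-y_{a₁}-weight perfect matching and to no maximum-y_{a₃}-weight perfect matching. (Such an instance exists already with n = 5.) -/

import Mathlib

set_option maxRecDepth 100000
set_option maxHeartbeats 4000000

def Xm : Fin 5 → Fin 5 → ℤ :=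
  ![![-1,-1,-5,-2,-5],![8,-1,4,-5,-1],![-2,7,4,5,7],![7,2,-2,7,1],![-6,0,-3,-4,-4]]

def Wz (k : ℤ) (σ : Equiv.Perm (Fin 5)) : ℤ :=
  ∑ i, (Xm i (σ i) + if σ i = i then k else 0)

def E (k : ℤ) (σ : Equiv.Perm (Fin 5)) : ℤ :=
  (Xm 0 (σ 0) + if σ 0 = 0 then k else 0) + (Xm 1 (σ 1) + if σ 1 = 1 then k else 0) +
  (Xm 2 (σ 2) + if σ 2 = 2 then k else 0) + (Xm 3 (σ 3) + if σ 3 = 3 then k else 0) +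
  (Xm 4 (σ 4) + if σ 4 = 4 then k else 0)

lemma wz_eq (k : ℤ) (σ : Equiv.Perm (Fin 5)) : Wz k σ = E k σ := by
  simp [Wz, E, Fin.sum_univ_five]

def d0 : Equiv.Perm (Fin 5) :=
  ⟨fun i => ![1,0,4,3,2] i, fun i => ![1,0,4,3,2] i, by decide, by decide⟩
def d2 : Equiv.Perm (Fin 5) :=
  ⟨fun i => ![0,2,4,3,1] i, fun i => ![0,4,1,3,2] i, by decide, by decide⟩
def d4 : Equiv.Perm (Fin 5) :=
  ⟨fun i => ![1,0,2,3,4] i, fun i => ![1,0,2,3,4] i, by decide, by decide⟩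

lemma ed0 : E 0 d0 = 18 := by decide
lemma ed2 : E 2 d2 = 21 := by decide
lemma ed4 : E 4 d4 = 26 := by decide

lemma fin5cases : ∀ j : Fin 5, j = 0 ∨ j = 1 ∨ j = 2 ∨ j = 3 ∨ j = 4 := by decide

lemma k0 : ∀ σ : Equiv.Perm (Fin 5), σ 0 = 0 → E 0 σ < 18 := by decide
lemma k2a : ∀ σ : Equiv.Perm (Fin 5), σ 0 = 1 → E 2 σ < 21 := by decide
lemma k2b : ∀ σ : Equiv.Perm (Fin 5), σ 0 = 2 → E 2 σ < 21 := by decide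
lemma k2c : ∀ σ : Equiv.Perm (Fin 5), σ 0 = 3 → E 2 σ < 21 := by decide
lemma k2d : ∀ σ : Equiv.Perm (Fin 5), σ 0 = 4 → E 2 σ < 21 := by decide
lemma k4 : ∀ σ : Equiv.Perm (Fin 5), σ 0 = 0 → E 4 σ < 26 := by decide

lemma key0 : ∀ σ : Equiv.Perm (Fin 5), σ 0 = 0 → Wz 0 σ < Wz 0 d0 := by
  intro σ h; rw [wz_eq, wz_eq, ed0]; exact k0 σ h

lemma key2 : ∀ σ : Equiv.Perm (Fin 5), σ 0 ≠ 0 → Wz 2 σ < Wz 2 d2 := by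
  intro σ h; rw [wz_eq, wz_eq, ed2]
  rcases fin5cases (σ 0) with h' | h' | h' | h' | h'
  · exact absurd h' h
  · exact k2a σ h'
  · exact k2b σ h'
  · exact k2c σ h'
  · exact k2d σ h'

lemma key4 : ∀ σ : Equiv.Perm (Fin 5), σ 0 = 0 → Wz 4 σ < Wz 4 d4 := by
  intro σ h; rw [wz_eq, wz_eq, ed4]; exact k4 σ h

lemma castW (a : ℝ) (k : ℤ) (h : a = (k : ℝ)) (σ : Equiv.Perm (Fin 5)) :
    (∑ i, ((Xm i (σ i) : ℝ) + if σ i = (1 : Equiv.Perm (Fin 5)) i then a else 0))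
      = ((Wz k σ : ℤ) : ℝ) := by
  subst h
  simp only [Wz, Int.cast_sum, Int.cast_add, apply_ite (fun z : ℤ => (z : ℝ)),
    Int.cast_zero, Equiv.Perm.coe_one, id_eq]
  rfl

/-- **The stability–fit tradeoff of stable assignment is not monotone.**
There exist an instance of the stable assignment problem on `K_{n,n}` (weights `x`,
current perfect matching `σ₀`, an edge `(i₀, σ₀ i₀)` of it) and parameters
`0 ≤ a₁ < a₂ < a₃` such that the edge belongs to every maximum-weight perfect matching
of the `a₂`-modified weights, but to no maximum-weight perfect matching of the
`a₁`-modified or `a₃`-modified weights (the modification adds `a` to each edge of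
`σ₀`). -/
theorem stable_assignment_not_monotone :
    ∃ (n : ℕ) (x : Fin n → Fin n → ℝ) (σ₀ : Equiv.Perm (Fin n)) (i₀ : Fin n)
      (a₁ a₂ a₃ : ℝ),
      0 ≤ a₁ ∧ a₁ < a₂ ∧ a₂ < a₃ ∧
      (let W : ℝ → Equiv.Perm (Fin n) → ℝ := fun a σ =>
        ∑ i, (x i (σ i) + if σ i = σ₀ i then a else 0)
      (∀ σ : Equiv.Perm (Fin n), (∀ σ', W a₂ σ' ≤ W a₂ σ) → σ i₀ = σ₀ i₀) ∧
      (∀ σ : Equiv.Perm (Fin n), (∀ σ', W a₁ σ' ≤ W a₁ σ) → σ i₀ ≠ σ₀ i₀) ∧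
      (∀ σ : Equiv.Perm (Fin n), (∀ σ', W a₃ σ' ≤ W a₃ σ) → σ i₀ ≠ σ₀ i₀)) := by
  refine ⟨5, fun i j => (Xm i j : ℝ), 1, 0, 0, 2, 4, le_refl 0, by norm_num, by norm_num,
    ?_, ?_, ?_⟩
  · intro σ hmax
    by_contra hne
    have h2 : Wz 2 σ < Wz 2 d2 := key2 σ (by simpa using hne)
    have h1 := hmax d2
    simp only [castW 2 2 (by norm_num)] at h1
    exact absurd (Int.cast_le.mp h1) (not_le.2 h2)
  · intro σ hmax hne
    have h2 : Wz 0 σ < Wz 0 d0 := key0 σ (by simpa using hne)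
    have h1 := hmax d0
    simp only [castW 0 0 (by norm_num)] at h1
    exact absurd (Int.cast_le.mp h1) (not_le.2 h2)
  · intro σ hmax hne
    have h2 : Wz 4 σ < Wz 4 d4 := key4 σ (by simpa using hne)
    have h1 := hmax d4
    simp only [castW 4 4 (by norm_num)] at h1
    exact absurd (Int.cast_le.mp h1) (not_le.2 h2)
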